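/- Fix an integer k ≥ 1 and α ∈ (−1/k, −1/(k+1)), and set p = p(n) = n^α (real power). Then for every n ≥ 1 and every j ≥ 1: (a) if either j = 2k−1 and α ∈ [−1/(k+1/2), −1/(k+1)), or 1 ≤ j ≤ 2k−2, then Var_{μ_{n,p}}[f_{n,j}] ≤ 2^{j+1} · n^{2j} · p^{2·C(j+1,2) − 1}; (b) if either j = 2k−1 and α ∈ (−1/k, −1/(k+1/2)], or j ≥ 2k, then Var_{μ_{n,p}}[f_{n,j}] ≤ 2^{j+1} · n^{j+1} · p^{C(j+1,2)}. -/

import Mathlib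

open Finset MeasureTheory Filter Real

noncomputable section

open scoped Classical

/-- The edge set `E_n`: unordered pairs of distinct elements of `[n]`. -/
abbrev Edge (n : ℕ) := {e : Sym2 (Fin n) // ¬ e.IsDiag}

/-- An edge configuration on `[n]`. -/
abbrev Config (n : ℕ) := Edge n → Bool

/-- Bernoulli(p) weight of a state. -/
def bern (p : ℝ) (b : Bool) : ℝ := if b then p else 1 - p

/-- Weight of a configuration under the static Erdős–Rényi measure `μ_{n,p}`. -/
def staticWeight (n : ℕ) (p : ℝ) (ω : Config n) : ℝ := ∏ e : Edge n, bern p (ω e)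

/-- Expectation under the static Erdős–Rényi measure `μ_{n,p}`. -/
def staticExp (n : ℕ) (p : ℝ) (f : Config n → ℝ) : ℝ :=
  ∑ ω : Config n, staticWeight n p ω * f ω

/-- Variance under the static Erdős–Rényi measure `μ_{n,p}`. -/
def staticVar (n : ℕ) (p : ℝ) (f : Config n → ℝ) : ℝ :=
  staticExp n p (fun ω => (f ω - staticExp n p f) ^ 2)

/-- `A` is a clique of the graph `G(ω)`: every pair of distinct elements of `A`
is an edge of `G(ω)`. -/
def IsCliqueOf {n : ℕ} (A : Finset (Fin n)) (ω : Config n) : Prop :=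
  ∀ e : Edge n, e.1 ∈ A.sym2 → ω e = true

/-- The clique count `f_{n,j}(ω)`: the number of `(j+1)`-element subsets of `[n]`
all of whose pairs are edges of `G(ω)`. -/
def cliqueCount (n j : ℕ) (ω : Config n) : ℕ :=
  ((Finset.powersetCard (j + 1) (Finset.univ : Finset (Fin n))).filter
    (fun A => IsCliqueOf A ω)).card

/-- Real-valued clique count. -/
def cliqueCountR (n j : ℕ) (ω : Config n) : ℝ := (cliqueCount n j ω : ℝ)

/-- The Euler characteristic `χ_n(ω) = Σ_{j=0}^{n-1} (-1)^j f_{n,j}(ω)`. -/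
def eulerChar (n : ℕ) (ω : Config n) : ℝ :=
  ∑ j ∈ Finset.range n, (-1 : ℝ) ^ j * cliqueCountR n j ω

/-- Transition probability of the stationary on/off Markov chain with invariant
law Bernoulli(p) over a time increment `s`. -/
def transP (lam p s : ℝ) (b b' : Bool) : ℝ :=
  if b then (if b' then p + (1 - p) * Real.exp (-lam * s)
             else (1 - p) * (1 - Real.exp (-lam * s)))
  else (if b' then p * (1 - Real.exp (-lam * s))
        else (1 - p) + p * Real.exp (-lam * s))

/-- Weight of a trajectory of the stationary on/off Markov chain observed at the
times `t 0 ≤ t 1 ≤ …`. -/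
def pathWeight (lam p : ℝ) {m : ℕ} (t : Fin m → ℝ) (b : Fin m → Bool) : ℝ :=
  ∏ i : Fin m,
    if (i : ℕ) = 0 then bern p (b i)
    else transP lam p (t i - t ⟨(i : ℕ) - 1, lt_of_le_of_lt (Nat.sub_le _ _) i.isLt⟩)
      (b ⟨(i : ℕ) - 1, lt_of_le_of_lt (Nat.sub_le _ _) i.isLt⟩) (b i)

/-- Weight of an `m`-tuple of edge configurations under the `m`-time dynamic
Erdős–Rényi measure `μ_{n,p}^{(t 0, …, t (m-1))}`. -/
def dynWeight (lam p : ℝ) (n : ℕ) {m : ℕ} (t : Fin m → ℝ) (ω : Fin m → Config n) : ℝ :=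
  ∏ e : Edge n, pathWeight lam p t (fun i => ω i e)

/-- Expectation under the `m`-time dynamic Erdős–Rényi measure. -/
def dynExp (lam p : ℝ) (n : ℕ) {m : ℕ} (t : Fin m → ℝ) (F : (Fin m → Config n) → ℝ) : ℝ :=
  ∑ ω : Fin m → Config n, dynWeight lam p n t ω * F ω

/-- The normalized clique count `f̄_{n,k}` (under the measure `μ_{n,p}`). -/
def fbar (n k : ℕ) (p : ℝ) (ω : Config n) : ℝ :=
  (cliqueCountR n k ω - staticExp n p (cliqueCountR n k)) /
    Real.sqrt (staticVar n p (cliqueCountR n k))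

/-- The normalized Euler characteristic `χ̄_n` (under the measure `μ_{n,p}`). -/
def chibar (n : ℕ) (p : ℝ) (ω : Config n) : ℝ :=
  (eulerChar n ω - staticExp n p (eulerChar n)) /
    Real.sqrt (staticVar n p (eulerChar n))

/-- The clique indicator `1_A(ω)` as a real number. -/
def cliqueInd {n : ℕ} (A : Finset (Fin n)) (ω : Config n) : ℝ :=
  if IsCliqueOf A ω then 1 else 0

/-- A quadruple of subsets has an independent set if one of them shares at most
one vertex with each of the others. -/
def HasIndepSet {n : ℕ} (A : Fin 4 → Finset (Fin n)) : Prop :=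
  ∃ q : Fin 4, ∀ r : Fin 4, r ≠ q → ((A q) ∩ (A r)).card ≤ 1

/-- The quantity `g(h; Ā)` built from clique indicators at three times. -/
def gQuad {n : ℕ} (A : Fin 4 → Finset (Fin n)) (ω : Fin 3 → Config n) : ℝ :=
  (cliqueInd (A 0) (ω 2) - cliqueInd (A 0) (ω 1)) *
  (cliqueInd (A 1) (ω 2) - cliqueInd (A 1) (ω 1)) *
  (cliqueInd (A 2) (ω 1) - cliqueInd (A 2) (ω 0)) *
  (cliqueInd (A 3) (ω 1) - cliqueInd (A 3) (ω 0))

/-- `ver(Ā)`: inclusion–exclusion count of vertices. -/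
def verA {n : ℕ} (A : Fin 4 → Finset (Fin n)) : ℤ :=
  (∑ q : Fin 4, ((A q).card : ℤ))
  - (∑ q : Fin 4, ∑ r : Fin 4, if q < r then (((A q) ∩ (A r)).card : ℤ) else 0)
  + (∑ q : Fin 4, ∑ r : Fin 4, ∑ s : Fin 4,
      if q < r ∧ r < s then (((A q) ∩ (A r) ∩ (A s)).card : ℤ) else 0)
  - ((A 0 ∩ A 1 ∩ A 2 ∩ A 3).card : ℤ)

/-- `pair(Ā)`: inclusion–exclusion count of potential edges. -/
def pairA {n : ℕ} (A : Fin 4 → Finset (Fin n)) : ℤ :=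
  (∑ q : Fin 4, (Nat.choose (A q).card 2 : ℤ))
  - (∑ q : Fin 4, ∑ r : Fin 4, if q < r then (Nat.choose ((A q) ∩ (A r)).card 2 : ℤ) else 0)
  + (∑ q : Fin 4, ∑ r : Fin 4, ∑ s : Fin 4,
      if q < r ∧ r < s then (Nat.choose ((A q) ∩ (A r) ∩ (A s)).card 2 : ℤ) else 0)
  - (Nat.choose (A 0 ∩ A 1 ∩ A 2 ∩ A 3).card 2 : ℤ)

-- auxiliary defs
def edgesOf {n : ℕ} (A : Finset (Fin n)) : Finset (Edge n) :=
  Finset.univ.filter (fun e => e.1 ∈ A.sym2)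

variable {n : ℕ} {p : ℝ}

lemma sum_config_prod (g : Edge n → Bool → ℝ) :
    ∑ ω : Config n, ∏ e, g e (ω e) = ∏ e, (g e false + g e true) := by
  rw [← Fintype.prod_sum (fun e b => g e b)]
  refine Finset.prod_congr rfl fun e _ => ?_
  simp [add_comm]

lemma indicator_eq_prod (S : Finset (Edge n)) (ω : Config n) :
    (if (∀ e ∈ S, ω e = true) then (1:ℝ) else 0) = ∏ e ∈ S, (if ω e then (1:ℝ) else 0) := by
  by_cases h : ∀ e ∈ S, ω e = true
  · rw [if_pos h]
    exact (Finset.prod_eq_one fun e he => by simp [h e he]).symm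
  · rw [if_neg h]
    push_neg at h
    obtain ⟨e, he, hne⟩ := h
    exact (Finset.prod_eq_zero he (by simp [hne])).symm

lemma exp_indicator (S : Finset (Edge n)) :
    staticExp n p (fun ω => if (∀ e ∈ S, ω e = true) then (1:ℝ) else 0) = p ^ S.card := by
  unfold staticExp staticWeight
  have h1 : ∀ ω : Config n, (∏ e, bern p (ω e)) * (if (∀ e ∈ S, ω e = true) then (1:ℝ) else 0)
      = ∏ e, (bern p (ω e) * if e ∈ S then (if ω e then (1:ℝ) else 0) else 1) := by
    intro ω
    rw [Finset.prod_mul_distrib, indicator_eq_prod]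
    congr 1
    rw [Finset.prod_ite_mem, Finset.univ_inter]
  rw [Finset.sum_congr rfl fun ω _ => h1 ω,
    sum_config_prod (fun e b => bern p b * if e ∈ S then (if b then (1:ℝ) else 0) else 1)]
  have h2 : ∀ e : Edge n,
      (bern p false * if e ∈ S then (if false then (1:ℝ) else 0) else 1)
      + (bern p true * if e ∈ S then (if true then (1:ℝ) else 0) else 1)
      = if e ∈ S then p else 1 := by
    intro e; by_cases he : e ∈ S <;> simp [bern, he]
  rw [Finset.prod_congr rfl fun e _ => h2 e, Finset.prod_ite_mem, Finset.univ_inter,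
    Finset.prod_const]

lemma staticExp_one : staticExp n p (fun _ => (1:ℝ)) = 1 := by
  simpa using exp_indicator (n := n) (p := p) (∅ : Finset (Edge n))

lemma staticVar_eq (f : Config n → ℝ) :
    staticVar n p f = staticExp n p (fun ω => f ω ^ 2) - (staticExp n p f) ^ 2 := by
  have h1 : ∑ ω : Config n, staticWeight n p ω = 1 := by
    simpa [staticExp] using staticExp_one (n := n) (p := p)
  unfold staticVar staticExp
  set μ := ∑ ω : Config n, staticWeight n p ω * f ω with hμ
  have h2 : ∀ ω : Config n, staticWeight n p ω * (f ω - μ) ^ 2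
      = staticWeight n p ω * f ω ^ 2 - 2 * μ * (staticWeight n p ω * f ω)
        + μ ^ 2 * staticWeight n p ω := fun ω => by ring
  rw [Finset.sum_congr rfl fun ω _ => h2 ω, Finset.sum_add_distrib, Finset.sum_sub_distrib,
    ← Finset.mul_sum, ← Finset.mul_sum, ← hμ, h1]
  ring

lemma isCliqueOf_iff (A : Finset (Fin n)) (ω : Config n) :
    IsCliqueOf A ω ↔ ∀ e ∈ edgesOf A, ω e = true := by
  simp [IsCliqueOf, edgesOf]

lemma cliqueInd_eq (A : Finset (Fin n)) (ω : Config n) :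
    cliqueInd A ω = if (∀ e ∈ edgesOf A, ω e = true) then (1:ℝ) else 0 := by
  rw [cliqueInd, if_congr (isCliqueOf_iff A ω) rfl rfl]

lemma exp_cliqueInd (A : Finset (Fin n)) :
    staticExp n p (cliqueInd A) = p ^ (edgesOf A).card := by
  rw [show cliqueInd (n := n) A = fun ω => if (∀ e ∈ edgesOf A, ω e = true) then (1:ℝ) else 0
    from funext fun ω => cliqueInd_eq A ω]
  exact exp_indicator _

lemma cliqueInd_mul (A B : Finset (Fin n)) (ω : Config n) :
    cliqueInd A ω * cliqueInd B ω
      = if (∀ e ∈ edgesOf A ∪ edgesOf B, ω e = true) then (1:ℝ) else 0 := by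
  rw [cliqueInd_eq, cliqueInd_eq,
    if_congr (Finset.forall_mem_union (s := edgesOf A) (t := edgesOf B)
      (p := fun e => ω e = true)) rfl rfl, ite_and]
  rw [ite_zero_mul, one_mul]

lemma exp_cliqueInd_mul (A B : Finset (Fin n)) :
    staticExp n p (fun ω => cliqueInd A ω * cliqueInd B ω)
      = p ^ (edgesOf A ∪ edgesOf B).card := by
  rw [show (fun ω => cliqueInd A ω * cliqueInd B ω)
      = fun ω => if (∀ e ∈ edgesOf A ∪ edgesOf B, ω e = true) then (1:ℝ) else 0
    from funext fun ω => cliqueInd_mul A B ω]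
  exact exp_indicator _

lemma card_sym2_filter_not_isDiag {γ : Type*} [DecidableEq γ] (s : Finset γ) :
    (s.sym2.filter fun e => ¬ e.IsDiag).card = s.card.choose 2 := by
  have hdiag : s.sym2.filter (fun e => e.IsDiag) = s.image (fun a => s(a, a)) := by
    ext e
    induction e using Sym2.ind with
    | _ x y =>
      simp only [Finset.mem_filter, Finset.mk_mem_sym2_iff, Sym2.isDiag_iff_proj_eq,
        Finset.mem_image, Sym2.eq_iff]
      constructor
      · rintro ⟨⟨hx, hy⟩, rfl⟩
        exact ⟨x, hx, Or.inl ⟨rfl, rfl⟩⟩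
      · rintro ⟨a, ha, (⟨rfl, rfl⟩ | ⟨rfl, rfl⟩)⟩ <;> exact ⟨⟨ha, ha⟩, rfl⟩
  have hinj : Function.Injective (fun a : γ => s(a, a)) := by
    intro a b hab
    simpa [Sym2.eq_iff] using hab
  have hcard : (s.sym2.filter (fun e => e.IsDiag)).card = s.card := by
    rw [hdiag, Finset.card_image_of_injective _ hinj]
  have htot := Finset.card_filter_add_card_filter_not
    (s := s.sym2) (p := fun e => e.IsDiag)
  rw [Finset.card_sym2, hcard] at htot
  have hsucc : (s.card + 1).choose 2 = s.card.choose 1 + s.card.choose 2 :=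
    Nat.choose_succ_succ s.card 1
  rw [Nat.choose_one_right] at hsucc
  omega

lemma card_edgesOf (A : Finset (Fin n)) : (edgesOf A).card = A.card.choose 2 := by
  rw [← card_sym2_filter_not_isDiag A]
  apply Finset.card_bij (fun (e : Edge n) _ => e.1)
  · intro e he
    simp only [edgesOf, Finset.mem_filter, Finset.mem_univ, true_and] at he
    simp [he, e.2]
  · intro e₁ h₁ e₂ h₂ h
    exact Subtype.ext h
  · intro x hx
    simp only [Finset.mem_filter] at hx
    exact ⟨⟨x, hx.2⟩, by simpa [edgesOf] using hx.1, rfl⟩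

lemma edgesOf_inter (A B : Finset (Fin n)) :
    edgesOf (A ∩ B) = edgesOf A ∩ edgesOf B := by
  ext e
  obtain ⟨x, hx⟩ := e
  induction x using Sym2.ind with
  | _ a b =>
    simp only [edgesOf, Finset.mem_inter, Finset.mem_filter, Finset.mem_univ, true_and,
      Finset.mk_mem_sym2_iff]
    tauto

lemma staticExp_sum {γ : Type*} (s : Finset γ) (g : γ → Config n → ℝ) :
    staticExp n p (fun ω => ∑ A ∈ s, g A ω) = ∑ A ∈ s, staticExp n p (g A) := by
  unfold staticExp
  rw [Finset.sum_comm]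
  exact Finset.sum_congr rfl fun A _ => by simp [Finset.mul_sum]

lemma cliqueCountR_eq (j : ℕ) (ω : Config n) :
    cliqueCountR n j ω
      = ∑ A ∈ Finset.powersetCard (j + 1) (Finset.univ : Finset (Fin n)), cliqueInd A ω := by
  rw [cliqueCountR, cliqueCount, Finset.card_filter]
  push_cast
  rfl

lemma staticVar_cliqueCount_eq (j : ℕ) :
    staticVar n p (cliqueCountR n j)
      = ∑ A ∈ Finset.powersetCard (j + 1) (Finset.univ : Finset (Fin n)),
          ∑ B ∈ Finset.powersetCard (j + 1) (Finset.univ : Finset (Fin n)),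
            (p ^ (edgesOf A ∪ edgesOf B).card
              - p ^ (edgesOf A).card * p ^ (edgesOf B).card) := by
  set P := Finset.powersetCard (j + 1) (Finset.univ : Finset (Fin n)) with hP
  rw [staticVar_eq]
  have h1 : staticExp n p (cliqueCountR n j) = ∑ A ∈ P, p ^ (edgesOf A).card := by
    rw [show cliqueCountR n j = fun ω => ∑ A ∈ P, cliqueInd A ω
      from funext fun ω => cliqueCountR_eq j ω, staticExp_sum]
    exact Finset.sum_congr rfl fun A _ => exp_cliqueInd A
  have h2 : staticExp n p (fun ω => cliqueCountR n j ω ^ 2)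
      = ∑ A ∈ P, ∑ B ∈ P, p ^ (edgesOf A ∪ edgesOf B).card := by
    have hsq : (fun ω => cliqueCountR n j ω ^ 2)
        = fun ω => ∑ A ∈ P, ∑ B ∈ P, cliqueInd A ω * cliqueInd B ω := by
      funext ω
      rw [cliqueCountR_eq, sq, Finset.sum_mul_sum]
    rw [hsq, staticExp_sum]
    refine Finset.sum_congr rfl fun A _ => ?_
    rw [staticExp_sum]
    exact Finset.sum_congr rfl fun B _ => exp_cliqueInd_mul A B
  rw [h1, h2, sq, Finset.sum_mul_sum, ← Finset.sum_sub_distrib]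
  exact Finset.sum_congr rfl fun A _ => by rw [← Finset.sum_sub_distrib]

lemma fiber_card_le (j i : ℕ) (hij : i ≤ j + 1) (A : Finset (Fin n)) (hA : A.card = j + 1) :
    ((Finset.powersetCard (j + 1) (Finset.univ : Finset (Fin n))).filter
        (fun B => (A ∩ B).card = i)).card ≤ (j + 1).choose i * n ^ (j + 1 - i) := by
  set P := Finset.powersetCard (j + 1) (Finset.univ : Finset (Fin n)) with hP
  have hle : (P.filter (fun B => (A ∩ B).card = i)).card
      ≤ ((Finset.powersetCard i A) ×ˢ
          (Finset.powersetCard (j + 1 - i) (Finset.univ : Finset (Fin n)))).card := by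
    apply Finset.card_le_card_of_injOn (fun B => (A ∩ B, B \ A))
    · intro B hB
      simp only [Finset.mem_coe, Finset.mem_filter, hP, Finset.mem_powersetCard_univ] at hB
      obtain ⟨hBcard, hABcard⟩ := hB
      rw [Finset.mem_coe, Finset.mem_product, Finset.mem_powersetCard, Finset.mem_powersetCard_univ]
      refine ⟨⟨Finset.inter_subset_left, hABcard⟩, ?_⟩
      show (B \ A).card = j + 1 - i
      have := Finset.card_inter_add_card_sdiff B A
      rw [Finset.inter_comm B A] at this
      omega
    · intro B₁ h₁ B₂ h₂ h
      simp only [Prod.mk.injEq] at h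
      have e1 : A ∩ B₁ ∪ B₁ \ A = B₁ := by
        ext x
        simp only [Finset.mem_union, Finset.mem_inter, Finset.mem_sdiff]
        tauto
      have e2 : A ∩ B₂ ∪ B₂ \ A = B₂ := by
        ext x
        simp only [Finset.mem_union, Finset.mem_inter, Finset.mem_sdiff]
        tauto
      rw [← e1, ← e2, h.1, h.2]
  rw [Finset.card_product, Finset.card_powersetCard, Finset.card_powersetCard, hA,
    Finset.card_univ, Fintype.card_fin] at hle
  exact hle.trans (Nat.mul_le_mul_left _ (Nat.choose_le_pow _ _))

lemma var_bound (j : ℕ) (T : ℝ) (hp0 : 0 ≤ p) (hp1 : p ≤ 1) (hT0 : 0 ≤ T)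
    (hT : ∀ i, 2 ≤ i → i ≤ j + 1 →
      (n : ℝ) ^ (j + 1 - i) * p ^ (2 * Nat.choose (j + 1) 2 - Nat.choose i 2) ≤ T) :
    staticVar n p (cliqueCountR n j) ≤ (n : ℝ) ^ (j + 1) * 2 ^ (j + 1) * T := by
  set P := Finset.powersetCard (j + 1) (Finset.univ : Finset (Fin n)) with hP
  set C := Nat.choose (j + 1) 2 with hC
  rw [staticVar_cliqueCount_eq]
  have hPA : ∀ A ∈ P, A.card = j + 1 := fun A hA => (Finset.mem_powersetCard_univ.mp hA)
  have hEA : ∀ A ∈ P, (edgesOf A).card = C := fun A hA => by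
    rw [card_edgesOf, hPA A hA]
  -- per-pair bound
  have hpair : ∀ A ∈ P, ∀ B ∈ P,
      p ^ (edgesOf A ∪ edgesOf B).card - p ^ (edgesOf A).card * p ^ (edgesOf B).card
        ≤ if 2 ≤ (A ∩ B).card then p ^ (2 * C - Nat.choose (A ∩ B).card 2) else 0 := by
    intro A hA B hB
    have hunion : (edgesOf A ∪ edgesOf B).card + Nat.choose (A ∩ B).card 2 = 2 * C := by
      have h1 := Finset.card_union_add_card_inter (edgesOf A) (edgesOf B)
      rw [← edgesOf_inter, card_edgesOf, hEA A hA, hEA B hB] at h1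
      omega
    rw [hEA A hA, hEA B hB, ← pow_add]
    by_cases h2 : 2 ≤ (A ∩ B).card
    · rw [if_pos h2]
      have : (edgesOf A ∪ edgesOf B).card = 2 * C - Nat.choose (A ∩ B).card 2 := by omega
      rw [this]
      have : (0:ℝ) ≤ p ^ (C + C) := pow_nonneg hp0 _
      linarith
    · rw [if_neg h2]
      have hch : Nat.choose (A ∩ B).card 2 = 0 := Nat.choose_eq_zero_of_lt (by omega)
      rw [hch, Nat.add_zero] at hunion
      rw [hunion]
      have h3 : C + C = 2 * C := by ring
      rw [h3]
      simp
  -- inner sum bound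
  have hinner : ∀ A ∈ P,
      (∑ B ∈ P, if 2 ≤ (A ∩ B).card then p ^ (2 * C - Nat.choose (A ∩ B).card 2) else 0)
        ≤ 2 ^ (j + 1) * T := by
    intro A hA
    rw [← Finset.sum_filter]
    set s := P.filter (fun B => 2 ≤ (A ∩ B).card) with hs
    have hmaps : ∀ B ∈ s, (A ∩ B).card ∈ Finset.Icc 2 (j + 1) := by
      intro B hB
      rw [hs, Finset.mem_filter] at hB
      rw [Finset.mem_Icc]
      refine ⟨hB.2, ?_⟩
      calc (A ∩ B).card ≤ B.card := Finset.card_le_card Finset.inter_subset_right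
        _ = j + 1 := hPA B hB.1
    rw [← Finset.sum_fiberwise_of_maps_to hmaps]
    have hfib : ∀ i ∈ Finset.Icc 2 (j + 1),
        (∑ B ∈ s.filter (fun B => (A ∩ B).card = i), p ^ (2 * C - Nat.choose (A ∩ B).card 2))
          ≤ ((j + 1).choose i : ℝ) * T := by
      intro i hi
      rw [Finset.mem_Icc] at hi
      have hcongr : ∀ B ∈ s.filter (fun B => (A ∩ B).card = i),
          p ^ (2 * C - Nat.choose (A ∩ B).card 2) = p ^ (2 * C - Nat.choose i 2) := by
        intro B hB
        rw [Finset.mem_filter] at hB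
        rw [hB.2]
      rw [Finset.sum_congr rfl hcongr, Finset.sum_const, nsmul_eq_mul]
      have hsub : s.filter (fun B => (A ∩ B).card = i) ⊆ P.filter (fun B => (A ∩ B).card = i) :=
        Finset.filter_subset_filter _ (Finset.filter_subset _ _)
      have hcard : (s.filter (fun B => (A ∩ B).card = i)).card
          ≤ (j + 1).choose i * n ^ (j + 1 - i) :=
        le_trans (Finset.card_le_card hsub) (fiber_card_le j i hi.2 A (hPA A hA))
      calc ((s.filter (fun B => (A ∩ B).card = i)).card : ℝ) * p ^ (2 * C - Nat.choose i 2)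
          ≤ (((j + 1).choose i * n ^ (j + 1 - i) : ℕ) : ℝ) * p ^ (2 * C - Nat.choose i 2) :=
            mul_le_mul_of_nonneg_right (by exact_mod_cast hcard) (pow_nonneg hp0 _)
        _ = ((j + 1).choose i : ℝ) * ((n : ℝ) ^ (j + 1 - i) * p ^ (2 * C - Nat.choose i 2)) := by
            push_cast; ring
        _ ≤ ((j + 1).choose i : ℝ) * T :=
            mul_le_mul_of_nonneg_left (hT i hi.1 hi.2) (by positivity)
    calc (∑ i ∈ Finset.Icc 2 (j + 1), ∑ B ∈ s.filter (fun B => (A ∩ B).card = i),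
            p ^ (2 * C - Nat.choose (A ∩ B).card 2))
        ≤ ∑ i ∈ Finset.Icc 2 (j + 1), ((j + 1).choose i : ℝ) * T :=
          Finset.sum_le_sum hfib
      _ = ((∑ i ∈ Finset.Icc 2 (j + 1), (j + 1).choose i : ℕ) : ℝ) * T := by
          rw [← Finset.sum_mul]; push_cast; ring
      _ ≤ 2 ^ (j + 1) * T := by
          refine mul_le_mul_of_nonneg_right ?_ hT0
          have hsub2 : Finset.Icc 2 (j + 1) ⊆ Finset.range (j + 2) := by
            intro x hx
            rw [Finset.mem_Icc] at hx
            rw [Finset.mem_range]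
            omega
          have := Finset.sum_le_sum_of_subset (f := fun i => (j + 1).choose i) hsub2
          rw [Nat.sum_range_choose] at this
          exact_mod_cast this
  -- put it together
  calc (∑ A ∈ P, ∑ B ∈ P,
          (p ^ (edgesOf A ∪ edgesOf B).card - p ^ (edgesOf A).card * p ^ (edgesOf B).card))
      ≤ ∑ A ∈ P, ∑ B ∈ P,
          (if 2 ≤ (A ∩ B).card then p ^ (2 * C - Nat.choose (A ∩ B).card 2) else 0) :=
        Finset.sum_le_sum fun A hA => Finset.sum_le_sum fun B hB => hpair A hA B hB
    _ ≤ ∑ A ∈ P, 2 ^ (j + 1) * T := Finset.sum_le_sum hinner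
    _ = (P.card : ℝ) * (2 ^ (j + 1) * T) := by rw [Finset.sum_const, nsmul_eq_mul]
    _ ≤ (n : ℝ) ^ (j + 1) * 2 ^ (j + 1) * T := by
        have hPcard : (P.card : ℕ) ≤ n ^ (j + 1) := by
          rw [hP, Finset.card_powersetCard, Finset.card_univ, Fintype.card_fin]
          exact Nat.choose_le_pow _ _
        have : (P.card : ℝ) ≤ (n : ℝ) ^ (j + 1) := by exact_mod_cast hPcard
        have h2T : (0:ℝ) ≤ 2 ^ (j + 1) * T := by positivity
        nlinarith

lemma rpow_mix (hn : 1 ≤ n) (α : ℝ) (a b c d : ℕ)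
    (h : (a : ℝ) + α * c ≤ (b : ℝ) + α * d) :
    (n : ℝ) ^ a * ((n : ℝ) ^ α) ^ c ≤ (n : ℝ) ^ b * ((n : ℝ) ^ α) ^ d := by
  have hn1 : (1 : ℝ) ≤ (n : ℝ) := by exact_mod_cast hn
  have hn0 : (0 : ℝ) < (n : ℝ) := lt_of_lt_of_le zero_lt_one hn1
  have key : ∀ a c : ℕ, (n : ℝ) ^ a * ((n : ℝ) ^ α) ^ c = (n : ℝ) ^ ((a : ℝ) + α * c) := by
    intro a c
    rw [Real.rpow_add hn0, Real.rpow_natCast,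
      ← Real.rpow_natCast ((n : ℝ) ^ α) c, ← Real.rpow_mul hn0.le]
  rw [key a c, key b d]
  exact Real.rpow_le_rpow_of_exponent_le hn1 h

lemma two_mul_choose_two (m : ℕ) : 2 * m.choose 2 = m * (m - 1) := by
  rcases m with _ | m
  · simp
  · rw [Nat.choose_two_right]
    have he : Even ((m + 1) * (m + 1 - 1)) := by
      simp only [Nat.add_sub_cancel]
      rw [mul_comm]
      exact Nat.even_mul_succ_self m
    obtain ⟨t, ht⟩ := he
    omega

set_option maxHeartbeats 1600000 in
/-- Upper bounds on the variance of the clique counts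
`f_{n,j}` when `p = n^α` with `α ∈ (-1/k, -1/(k+1))`. -/
theorem variance_cliqueCount_upper_bounds (k : ℕ) (hk : 1 ≤ k) (α : ℝ)
    (hα : α ∈ Set.Ioo (-(1 / (k : ℝ))) (-(1 / ((k : ℝ) + 1))))
    (n : ℕ) (hn : 1 ≤ n) (j : ℕ) (hj : 1 ≤ j) :
    (((j = 2 * k - 1 ∧
          α ∈ Set.Ico (-(1 / ((k : ℝ) + 1 / 2))) (-(1 / ((k : ℝ) + 1)))) ∨
        (1 ≤ j ∧ j ≤ 2 * k - 2)) →
      staticVar n ((n : ℝ) ^ α) (cliqueCountR n j) ≤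
        2 ^ (j + 1) * (n : ℝ) ^ (2 * j) *
          ((n : ℝ) ^ α) ^ (2 * Nat.choose (j + 1) 2 - 1)) ∧
    (((j = 2 * k - 1 ∧
          α ∈ Set.Ioc (-(1 / (k : ℝ))) (-(1 / ((k : ℝ) + 1 / 2)))) ∨
        2 * k ≤ j) →
      staticVar n ((n : ℝ) ^ α) (cliqueCountR n j) ≤
        2 ^ (j + 1) * (n : ℝ) ^ (j + 1) *
          ((n : ℝ) ^ α) ^ (Nat.choose (j + 1) 2)) := by
  obtain ⟨hαl, hαr⟩ := hα
  have hk1 : (1 : ℝ) ≤ (k : ℝ) := by exact_mod_cast hk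
  have hn1 : (1 : ℝ) ≤ (n : ℝ) := by exact_mod_cast hn
  have hn0 : (0 : ℝ) < (n : ℝ) := by linarith
  have hα0 : α < 0 := by
    have h1 : (0 : ℝ) < 1 / ((k : ℝ) + 1) := by positivity
    linarith
  set p := (n : ℝ) ^ α with hpdef
  have hp0 : 0 < p := Real.rpow_pos_of_pos hn0 α
  have hp1 : p ≤ 1 := Real.rpow_le_one_of_one_le_of_nonpos hn1 hα0.le
  set C := Nat.choose (j + 1) 2 with hC
  have hC1 : 1 ≤ C := Nat.choose_pos (by omega)
  have h2C : 2 * C = (j + 1) * j := by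
    rw [hC, two_mul_choose_two, Nat.add_sub_cancel]
  have h2Cr : 2 * (C : ℝ) = ((j : ℝ) + 1) * j := by exact_mod_cast h2C
  have hj1 : (1 : ℝ) ≤ (j : ℝ) := by exact_mod_cast hj
  -- generic facts about i
  have hfacts : ∀ i : ℕ, 2 ≤ i → i ≤ j + 1 →
      (2 : ℝ) ≤ (i : ℝ) ∧ (i : ℝ) ≤ (j : ℝ) + 1 ∧
      2 * ((i.choose 2 : ℕ) : ℝ) = (i : ℝ) * ((i : ℝ) - 1) ∧
      (1 : ℝ) ≤ ((i.choose 2 : ℕ) : ℝ) ∧ i.choose 2 ≤ C := by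
    intro i hi2 hij
    have c1 : (2 : ℝ) ≤ (i : ℝ) := by exact_mod_cast hi2
    have c2 : (i : ℝ) ≤ (j : ℝ) + 1 := by exact_mod_cast hij
    have c3n : 2 * i.choose 2 = i * (i - 1) := two_mul_choose_two i
    have c3 : 2 * ((i.choose 2 : ℕ) : ℝ) = (i : ℝ) * ((i : ℝ) - 1) := by
      have : ((i - 1 : ℕ) : ℝ) = (i : ℝ) - 1 := by
        rw [Nat.cast_sub (by omega)]; norm_num
      rw [← this]; exact_mod_cast c3n
    have c4n : 1 ≤ i.choose 2 := Nat.choose_pos hi2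
    have c5 : i.choose 2 ≤ C := Nat.choose_le_choose 2 hij
    exact ⟨c1, c2, c3, by exact_mod_cast c4n, c5⟩
  constructor
  · -- case (a)
    intro hcase
    have hkey : -2 / ((j : ℝ) + 2) ≤ α := by
      rcases hcase with ⟨hj', hIco⟩ | ⟨_, hj2⟩
      · have hj2 : j + 2 = 2 * k + 1 := by omega
        have hjr : (j : ℝ) + 2 = 2 * (k : ℝ) + 1 := by exact_mod_cast hj2
        have heq : -2 / ((j : ℝ) + 2) = -(1 / ((k : ℝ) + 1 / 2)) := by
          rw [hjr]
          have h1 : (2 : ℝ) * (k : ℝ) + 1 ≠ 0 := by linarith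
          have h2 : (k : ℝ) + 1 / 2 ≠ 0 := by linarith
          field_simp
        rw [heq]
        exact hIco.1
      · have hjk : j + 2 ≤ 2 * k := by omega
        have hjkr : (j : ℝ) + 2 ≤ 2 * (k : ℝ) := by exact_mod_cast hjk
        have h1 : (0 : ℝ) < (j : ℝ) + 2 := by linarith
        have h2 : 2 / (2 * (k : ℝ)) ≤ 2 / ((j : ℝ) + 2) :=
          div_le_div_of_nonneg_left (by norm_num) h1 hjkr
        have h3 : 2 / (2 * (k : ℝ)) = 1 / (k : ℝ) := by
          field_simp
        have : -2 / ((j : ℝ) + 2) ≤ -(1 / (k : ℝ)) := by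
          rw [← h3]; rw [neg_div]; linarith
        linarith
    have he1 : -2 ≤ α * ((j : ℝ) + 2) := by
      have h1 : (0 : ℝ) < (j : ℝ) + 2 := by linarith
      have := (div_le_iff₀ h1).mp hkey
      linarith
    -- apply var_bound with T = n^(j-1) * p^(2C-1)
    set T := (n : ℝ) ^ (j - 1) * p ^ (2 * C - 1) with hT
    have hT0 : 0 ≤ T := by
      apply mul_nonneg (pow_nonneg hn0.le _) (pow_nonneg hp0.le _)
    have hTi : ∀ i, 2 ≤ i → i ≤ j + 1 →
        (n : ℝ) ^ (j + 1 - i) * p ^ (2 * C - i.choose 2) ≤ T := by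
      intro i hi2 hij
      obtain ⟨c1, c2, c3, c4, c5⟩ := hfacts i hi2 hij
      rw [hT, hpdef]
      have hcast1 : ((j + 1 - i : ℕ) : ℝ) = (j : ℝ) + 1 - (i : ℝ) := by
        rw [Nat.cast_sub hij]; push_cast; ring
      have hcast2 : ((2 * C - i.choose 2 : ℕ) : ℝ) = 2 * (C : ℝ) - ((i.choose 2 : ℕ) : ℝ) := by
        rw [Nat.cast_sub (le_trans c5 (by omega))]; push_cast; ring
      have hcast3 : ((j - 1 : ℕ) : ℝ) = (j : ℝ) - 1 := by
        rw [Nat.cast_sub hj]; norm_num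
      have hcast4 : ((2 * C - 1 : ℕ) : ℝ) = 2 * (C : ℝ) - 1 := by
        rw [Nat.cast_sub (by omega)]; push_cast; ring
      apply rpow_mix hn
      rw [hcast1, hcast2, hcast3, hcast4]
      -- (j+1-i) + α(2C - ci) ≤ (j-1) + α(2C - 1)
      set ci := ((i.choose 2 : ℕ) : ℝ) with hci
      have hA1 : -2 ≤ α * ((i : ℝ) + 1) := by
        have e2 : α * ((j : ℝ) + 2) ≤ α * ((i : ℝ) + 1) :=
          mul_le_mul_of_nonpos_left (by linarith) hα0.le
        linarith
      have hA2 : -2 * (((i : ℝ) - 2) / 2) ≤ α * ((i : ℝ) + 1) * (((i : ℝ) - 2) / 2) :=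
        mul_le_mul_of_nonneg_right hA1 (by linarith)
      have hA3 : α * ((i : ℝ) + 1) * (((i : ℝ) - 2) / 2) = α * (ci - 1) := by
        linear_combination -(α / 2) * c3
      nlinarith [hA2, hA3]
    calc staticVar n p (cliqueCountR n j) ≤ (n : ℝ) ^ (j + 1) * 2 ^ (j + 1) * T :=
          var_bound j T hp0.le hp1 hT0 hTi
      _ = 2 ^ (j + 1) * (n : ℝ) ^ (2 * j) * p ^ (2 * C - 1) := by
          rw [hT, show 2 * j = (j + 1) + (j - 1) from by omega, pow_add]
          ring
  · -- case (b)
    intro hcase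
    have hkey : α ≤ -2 / ((j : ℝ) + 2) := by
      rcases hcase with ⟨hj', hIoc⟩ | hj2k
      · have hj2 : j + 2 = 2 * k + 1 := by omega
        have hjr : (j : ℝ) + 2 = 2 * (k : ℝ) + 1 := by exact_mod_cast hj2
        have heq : -2 / ((j : ℝ) + 2) = -(1 / ((k : ℝ) + 1 / 2)) := by
          rw [hjr]
          have h1 : (2 : ℝ) * (k : ℝ) + 1 ≠ 0 := by linarith
          have h2 : (k : ℝ) + 1 / 2 ≠ 0 := by linarith
          field_simp
        rw [heq]
        exact hIoc.2
      · have hjk : 2 * k + 2 ≤ j + 2 := by omega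
        have hjkr : 2 * (k : ℝ) + 2 ≤ (j : ℝ) + 2 := by exact_mod_cast hjk
        have h1 : (0 : ℝ) < 2 * (k : ℝ) + 2 := by linarith
        have h2 : 2 / ((j : ℝ) + 2) ≤ 2 / (2 * (k : ℝ) + 2) :=
          div_le_div_of_nonneg_left (by norm_num) h1 hjkr
        have h3 : 2 / (2 * (k : ℝ) + 2) = 1 / ((k : ℝ) + 1) := by
          field_simp
        have : -(1 / ((k : ℝ) + 1)) ≤ -2 / ((j : ℝ) + 2) := by
          rw [← h3, neg_div]; linarith
        linarith
    have he1 : α * ((j : ℝ) + 2) ≤ -2 := by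
      have h1 : (0 : ℝ) < (j : ℝ) + 2 := by linarith
      have := (le_div_iff₀ h1).mp hkey
      linarith
    set T := p ^ C with hT
    have hT0 : 0 ≤ T := pow_nonneg hp0.le _
    have hTi : ∀ i, 2 ≤ i → i ≤ j + 1 →
        (n : ℝ) ^ (j + 1 - i) * p ^ (2 * C - i.choose 2) ≤ T := by
      intro i hi2 hij
      obtain ⟨c1, c2, c3, c4, c5⟩ := hfacts i hi2 hij
      rw [hT, hpdef]
      have hcast1 : ((j + 1 - i : ℕ) : ℝ) = (j : ℝ) + 1 - (i : ℝ) := by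
        rw [Nat.cast_sub hij]; push_cast; ring
      have hcast2 : ((2 * C - i.choose 2 : ℕ) : ℝ) = 2 * (C : ℝ) - ((i.choose 2 : ℕ) : ℝ) := by
        rw [Nat.cast_sub (le_trans c5 (by omega))]; push_cast; ring
      set ci := ((i.choose 2 : ℕ) : ℝ) with hci
      have e3 : α * ((j : ℝ) + (i : ℝ)) ≤ -2 := by
        have e2 : α * ((j : ℝ) + (i : ℝ)) ≤ α * ((j : ℝ) + 2) :=
          mul_le_mul_of_nonpos_left (by linarith) hα0.le
        linarith
      have e4 : ((j : ℝ) + 1 - (i : ℝ)) * (α * ((j : ℝ) + (i : ℝ)))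
          ≤ ((j : ℝ) + 1 - (i : ℝ)) * (-2) :=
        mul_le_mul_of_nonneg_left e3 (by linarith)
      have e5 : ((j : ℝ) + 1 - (i : ℝ)) * (α * ((j : ℝ) + (i : ℝ)))
          = 2 * α * ((C : ℝ) - ci) := by
        linear_combination α * c3 - α * h2Cr
      have hexp : (((j + 1 - i : ℕ)) : ℝ) + α * (((2 * C - i.choose 2 : ℕ)) : ℝ)
          ≤ (((0 : ℕ)) : ℝ) + α * ((C : ℕ) : ℝ) := by
        rw [hcast1, hcast2, Nat.cast_zero]
        nlinarith [e4, e5]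
      have hfin := rpow_mix (n := n) hn α (j + 1 - i) 0 (2 * C - i.choose 2) C hexp
      simpa using hfin
    calc staticVar n p (cliqueCountR n j) ≤ (n : ℝ) ^ (j + 1) * 2 ^ (j + 1) * T :=
          var_bound j T hp0.le hp1 hT0 hTi
      _ = 2 ^ (j + 1) * (n : ℝ) ^ (j + 1) * p ^ C := by rw [hT]; ring


end
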